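/- Let γ ∈ H²(𝕋¹; ℝ³) have unit speed, and define δ(x,y) by |γ(x)-γ(y)|² = (1 - δ(x,y))·ϑ(x-y)². Then δ(x,y) ≤ √(2π)·‖γ''‖_{L²(𝕋¹)}·ϑ(x-y)^{1/2} for all x,y ∈ 𝕋¹. -/

import Mathlib

open MeasureTheory Real

lemma periodic_intervalIntegrable {g : ℝ → ℝ} (hg : Function.Periodic g (2 * π))
    (h0 : IntervalIntegrable g volume (-π) π) {a b : ℝ} (hab : a ≤ b)
    (hlen : b - a ≤ 2 * π) : IntervalIntegrable g volume a b := by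
  have hπ := Real.pi_pos
  have h2π : (0:ℝ) < 2 * π := by positivity
  have tile : ∀ n : ℤ, IntervalIntegrable g volume (-π + 2 * π * n) (π + 2 * π * n) := by
    intro n
    have h1 := h0.comp_add_right (-(2 * π * n))
    have heq : (fun x => g (x + -(2 * π * n))) = g := by
      funext x
      have h2 := hg.sub_int_mul_eq (x := x) n
      have : x + -(2 * π * n) = x - n * (2 * π) := by push_cast; ring
      rw [this, h2]
    rw [heq] at h1
    have e1 : -π - -(2 * π * n) = -π + 2 * π * n := by ring
    have e2 : π - -(2 * π * n) = π + 2 * π * n := by ring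
    rwa [e1, e2] at h1
  set k : ℤ := ⌊(a + π) / (2 * π)⌋ with hk
  have hk1 : -π + 2 * π * k ≤ a := by
    have h := Int.floor_le ((a + π) / (2 * π))
    rw [← hk] at h
    have := (le_div_iff₀ h2π).mp h
    linarith
  have hk2 : b ≤ π + 2 * π * (k + 1) := by
    have h := Int.lt_floor_add_one ((a + π) / (2 * π))
    rw [← hk] at h
    have := (div_lt_iff₀ h2π).mp h
    push_cast
    linarith
  have t2 : IntervalIntegrable g volume (π + 2 * π * k) (π + 2 * π * (k + 1)) := by
    have := tile (k + 1)
    have e : -π + 2 * π * ((k : ℝ) + 1) = π + 2 * π * k := by ring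
    push_cast at this
    rwa [e] at this
  have t2' : IntervalIntegrable g volume (π + 2 * π * k) (π + 2 * π * ((k:ℤ) + 1)) := by
    push_cast; exact t2
  have big : IntervalIntegrable g volume (-π + 2 * π * k) (π + 2 * π * ((k:ℤ) + 1)) :=
    (tile k).trans t2'
  refine big.mono_set ?_
  rw [Set.uIcc_of_le hab, Set.uIcc_of_le (by push_cast; nlinarith)]
  push_cast
  push_cast at hk2
  exact Set.Icc_subset_Icc hk1 hk2

lemma core_estimate (γ γ' γ'' : ℝ → EuclideanSpace ℝ (Fin 3))
    (hper'' : Function.Periodic γ'' (2 * π))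
    (hInt' : ∀ a b : ℝ, IntervalIntegrable γ' volume a b)
    (hInt'' : ∀ a b : ℝ, IntervalIntegrable γ'' volume a b)
    (hFTC : ∀ a b : ℝ, γ b - γ a = ∫ x in a..b, γ' x)
    (hFTC' : ∀ a b : ℝ, γ' b - γ' a = ∫ x in a..b, γ'' x)
    (hL2 : MemLp γ'' 2 (volume.restrict (Set.Ioc (-π) π)))
    (hspeed : ∀ x, ‖γ' x‖ = 1) (a b : ℝ) (hab : a ≤ b) (hba : b - a ≤ π) :
    (b - a) ^ 2 - ‖γ b - γ a‖ ^ 2 ≤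
      Real.sqrt (∫ t in (-π)..π, ‖γ'' t‖ ^ 2) * Real.sqrt (b - a) * (b - a) ^ 2 := by
  have hπ := Real.pi_pos
  set g : ℝ → ℝ := fun s => ‖γ'' s‖ ^ 2 with hgdef
  set Q : ℝ := ∫ t in (-π)..π, g t with hQdef
  set w : ℝ := b - a with hwdef
  set N : ℝ := ‖γ b - γ a‖ with hNdef
  have hw0 : 0 ≤ w := by simp [hwdef]; linarith
  have hN0 : 0 ≤ N := norm_nonneg _
  have hQ0 : 0 ≤ Q := intervalIntegral.integral_nonneg (by linarith) (fun t _ => sq_nonneg _)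
  -- trivial case
  by_cases h1 : 1 ≤ Real.sqrt Q * Real.sqrt w
  · have h2 : 0 ≤ (Real.sqrt Q * Real.sqrt w - 1) * w ^ 2 :=
      mul_nonneg (by linarith) (sq_nonneg _)
    nlinarith [sq_nonneg N]
  push_neg at h1
  have hsq : 0 ≤ Real.sqrt Q * Real.sqrt w :=
    mul_nonneg (Real.sqrt_nonneg _) (Real.sqrt_nonneg _)
  have hQw : Q * w < 1 := by
    have h2 : Real.sqrt (Q * w) < 1 := by rw [Real.sqrt_mul hQ0]; exact h1
    nlinarith [Real.sq_sqrt (mul_nonneg hQ0 hw0), Real.sqrt_nonneg (Q * w)]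
  -- periodicity + integrability of g
  have hgper : Function.Periodic g (2 * π) := fun s => by simp [hgdef, hper'' s]
  have hg0 : IntervalIntegrable g volume (-π) π := by
    have hInt2 : Integrable (fun s => ‖γ'' s‖ ^ 2) (volume.restrict (Set.Ioc (-π) π)) :=
      (memLp_two_iff_integrable_sq_norm hL2.1).mp hL2
    rw [intervalIntegrable_iff_integrableOn_Ioc_of_le (by linarith)]
    exact hInt2
  have hgInt : ∀ u v : ℝ, u ≤ v → v - u ≤ 2 * π → IntervalIntegrable g volume u v :=
    fun u v h h' => periodic_intervalIntegrable hgper hg0 h h'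
  -- continuity of γ'
  have cont' : Continuous γ' := by
    have he : γ' = fun t => γ' 0 + ∫ s in (0:ℝ)..t, γ'' s := by
      funext t
      have h := hFTC' 0 t
      rw [← h]; abel
    rw [he]
    exact continuous_const.add (intervalIntegral.continuous_primitive hInt'' 0)
  -- integral of g over [a,b] is at most Q
  have hQb : (∫ s in a..b, g s) ≤ Q := by
    have hper2π : (∫ s in a..(a + 2 * π), g s) = Q := by
      have h := hgper.intervalIntegral_add_eq a (-π)
      rw [hQdef, h]
      congr 1
      ring
    have hb2 : b ≤ a + 2 * π := by linarith
    have i1 : IntervalIntegrable g volume a b := hgInt a b hab (by linarith)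
    have i2 : IntervalIntegrable g volume b (a + 2 * π) := hgInt b (a + 2 * π) hb2 (by linarith)
    have hsplit : (∫ s in a..b, g s) + (∫ s in b..(a + 2 * π), g s)
        = ∫ s in a..(a + 2 * π), g s := intervalIntegral.integral_add_adjacent_intervals i1 i2
    have hnn : 0 ≤ ∫ s in b..(a + 2 * π), g s :=
      intervalIntegral.integral_nonneg hb2 (fun t _ => sq_nonneg _)
    linarith [hsplit, hper2π]
  -- pointwise estimate on γ'
  have hpt : ∀ t ∈ Set.Icc a b, ‖γ' t - γ' a‖ ^ 2 ≤ (t - a) * Q := by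
    intro t ht
    obtain ⟨hta, htb⟩ := ht
    have hta0 : 0 ≤ t - a := by linarith
    have hQt0 : 0 ≤ ∫ s in a..t, g s :=
      intervalIntegral.integral_nonneg hta (fun s _ => sq_nonneg _)
    have h1' : ‖γ' t - γ' a‖ ≤ ∫ s in a..t, ‖γ'' s‖ := by
      rw [hFTC' a t]
      exact intervalIntegral.norm_integral_le_integral_norm hta
    have hfin : IsFiniteMeasure (volume.restrict (Set.Ioc a t)) := by
      constructor
      rw [Measure.restrict_apply_univ]
      exact measure_Ioc_lt_top
    have hmem1 : MemLp (fun s => ‖γ'' s‖) 2 (volume.restrict (Set.Ioc a t)) := by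
      refine (memLp_two_iff_integrable_sq ((hInt'' a t).1.aestronglyMeasurable.norm)).mpr ?_
      have := (hgInt a t hta (by linarith)).1
      simpa [hgdef, IntegrableOn] using this
    have hmem2 : MemLp (fun _ : ℝ => (1:ℝ)) 2 (volume.restrict (Set.Ioc a t)) :=
      memLp_const 1
    have hCS := integral_mul_le_Lp_mul_Lq_of_nonneg (Real.holderConjugate_iff_eq_conjExponent (by norm_num) |>.mpr (by norm_num) : Real.HolderConjugate 2 2)
      (Filter.Eventually.of_forall fun s => norm_nonneg (γ'' s))
      (Filter.Eventually.of_forall fun s => zero_le_one)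
      (by simpa using hmem1) (by simpa using hmem2)
    simp only [mul_one, Real.one_rpow] at hCS
    -- hCS : ∫ ‖γ''‖ dμ ≤ (∫ ‖γ''‖^(2:ℝ) dμ)^(1/2:ℝ) * (∫ 1 dμ)^(1/2:ℝ)
    have hvol : (volume.restrict (Set.Ioc a t)) Set.univ = ENNReal.ofReal (t - a) := by
      rw [Measure.restrict_apply_univ, Real.volume_Ioc]
    have hIoc : ∀ h : ℝ → ℝ, (∫ s in a..t, h s) = ∫ s, h s ∂(volume.restrict (Set.Ioc a t)) :=
      fun h => intervalIntegral.integral_of_le hta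
    have e1 : (∫ s, ‖γ'' s‖ ∂(volume.restrict (Set.Ioc a t))) = ∫ s in a..t, ‖γ'' s‖ :=
      (hIoc _).symm
    have e2 : (∫ s, ‖γ'' s‖ ^ (2:ℝ) ∂(volume.restrict (Set.Ioc a t))) = ∫ s in a..t, g s := by
      rw [← hIoc]
      refine intervalIntegral.integral_congr fun s _ => ?_
      show ‖γ'' s‖ ^ (2:ℝ) = ‖γ'' s‖ ^ 2
      rw [show (2:ℝ) = ((2:ℕ):ℝ) by norm_num, Real.rpow_natCast]
    have e3 : (∫ _ , (1:ℝ) ∂(volume.restrict (Set.Ioc a t))) = t - a := by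
      rw [integral_const, measureReal_def, hvol, smul_eq_mul, mul_one, ENNReal.toReal_ofReal hta0]
    rw [e1, e2, e3] at hCS
    have h2' : (∫ s in a..t, ‖γ'' s‖) ≤ Real.sqrt (∫ s in a..t, g s) * Real.sqrt (t - a) := by
      rw [Real.sqrt_eq_rpow, Real.sqrt_eq_rpow]
      exact hCS
    have hQtQ : (∫ s in a..t, g s) ≤ Q := by
      have i1 : IntervalIntegrable g volume a t := hgInt a t hta (by linarith)
      have i2 : IntervalIntegrable g volume t b := hgInt t b htb (by linarith)
      have hsplit := intervalIntegral.integral_add_adjacent_intervals i1 i2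
      have hnn : 0 ≤ ∫ s in t..b, g s :=
        intervalIntegral.integral_nonneg htb (fun s _ => sq_nonneg _)
      linarith [hQb]
    have hnorm2 : ‖γ' t - γ' a‖ ^ 2 ≤ (∫ s in a..t, g s) * (t - a) := by
      have hchain := h1'.trans h2'
      have := pow_le_pow_left₀ (norm_nonneg (γ' t - γ' a)) hchain 2
      calc ‖γ' t - γ' a‖ ^ 2 ≤ (Real.sqrt (∫ s in a..t, g s) * Real.sqrt (t - a)) ^ 2 := this
        _ = (∫ s in a..t, g s) * (t - a) := by
            rw [mul_pow, Real.sq_sqrt hQt0, Real.sq_sqrt hta0]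
    calc ‖γ' t - γ' a‖ ^ 2 ≤ (∫ s in a..t, g s) * (t - a) := hnorm2
      _ ≤ Q * (t - a) := mul_le_mul_of_nonneg_right hQtQ hta0
      _ = (t - a) * Q := by ring
  -- inner product identity
  have hinner : (inner ℝ (γ' a) (γ b - γ a) : ℝ) = ∫ t in a..b, (inner ℝ (γ' a) (γ' t) : ℝ) := by
    rw [hFTC a b]
    have h := ContinuousLinearMap.intervalIntegral_comp_comm (innerSL ℝ (γ' a)) (hInt' a b)
    simpa using h.symm
  have hpt2 : ∀ t : ℝ, (inner ℝ (γ' a) (γ' t) : ℝ) = 1 - ‖γ' t - γ' a‖ ^ 2 / 2 := by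
    intro t
    have h := @norm_sub_sq_real (EuclideanSpace ℝ (Fin 3)) _ _ (γ' t) (γ' a)
    rw [hspeed t, hspeed a, real_inner_comm] at h
    linarith
  -- integral lower bound
  have e4 : (∫ t in a..b, (1 - (t - a) * Q / 2)) = w - Q * w ^ 2 / 4 := by
    have hsub : (∫ t in a..b, (1 - (t - a) * Q / 2))
        = (∫ _ in a..b, (1:ℝ)) - ∫ t in a..b, (t - a) * Q / 2 := by
      apply intervalIntegral.integral_sub intervalIntegrable_const
      exact (((continuous_id.sub continuous_const).mul continuous_const).div_const
        2).intervalIntegrable _ _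
    have h3 : (∫ t in a..b, (t - a)) = (b - a) ^ 2 / 2 := by
      rw [intervalIntegral.integral_comp_sub_right (fun u => u) a, integral_id]
      simp
    have h2 : (∫ t in a..b, (t - a) * Q / 2) = ((b - a) ^ 2 / 2) * Q / 2 := by
      have hc : (∫ t in a..b, (t - a) * Q / 2) = ∫ t in a..b, (Q / 2) * (t - a) := by
        apply intervalIntegral.integral_congr
        intro t _
        ring
      rw [hc, intervalIntegral.integral_const_mul, h3]
      ring
    rw [hsub, h2, intervalIntegral.integral_const, hwdef]
    simp
    ring
  have hmono : w - Q * w ^ 2 / 4 ≤ ∫ t in a..b, (inner ℝ (γ' a) (γ' t) : ℝ) := by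
    rw [← e4]
    refine intervalIntegral.integral_mono_on hab ?_ ?_ ?_
    · exact ((continuous_const.sub (((continuous_id.sub continuous_const).mul
        continuous_const).div_const 2))).intervalIntegrable _ _
    · exact (Continuous.inner continuous_const cont').intervalIntegrable _ _
    · intro t ht
      rw [hpt2 t]
      have := hpt t ht
      linarith
  have hNlow : w - Q * w ^ 2 / 4 ≤ N := by
    have h5 := real_inner_le_norm (γ' a) (γ b - γ a)
    rw [hspeed a, one_mul] at h5
    calc w - Q * w ^ 2 / 4 ≤ ∫ t in a..b, (inner ℝ (γ' a) (γ' t) : ℝ) := hmono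
      _ = (inner ℝ (γ' a) (γ b - γ a) : ℝ) := hinner.symm
      _ ≤ N := h5
  -- combine
  clear_value Q w N
  have hQw2 : Q * w ^ 2 ≤ w := by nlinarith
  have hL0 : 0 ≤ w - Q * w ^ 2 / 4 := by nlinarith [hQw2, hw0]
  have h5 : (w - Q * w ^ 2 / 4) ^ 2 ≤ N ^ 2 := pow_le_pow_left₀ hL0 hNlow 2
  have h6 : w ^ 2 - (w - Q * w ^ 2 / 4) ^ 2 ≤ Q * w ^ 3 / 2 := by nlinarith [sq_nonneg (Q * w ^ 2)]
  have h8 : Q * w ≤ Real.sqrt Q * Real.sqrt w := by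
    rw [← Real.sqrt_mul hQ0]
    have h9 : 0 ≤ Q * w := mul_nonneg hQ0 hw0
    have hs1 : Real.sqrt (Q * w) ≤ 1 := by
      rw [show (1:ℝ) = Real.sqrt 1 by simp]
      exact Real.sqrt_le_sqrt (le_of_lt hQw)
    nlinarith [Real.sq_sqrt h9, Real.sqrt_nonneg (Q * w)]
  have h7 : Q * w ^ 3 / 2 ≤ Real.sqrt Q * Real.sqrt w * w ^ 2 := by
    have h10 := mul_le_mul_of_nonneg_right h8 (sq_nonneg w)
    have h11 : 0 ≤ Real.sqrt Q * Real.sqrt w * w ^ 2 := mul_nonneg hsq (sq_nonneg w)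
    have h12 : Q * w ^ 3 = Q * w * w ^ 2 := by ring
    linarith
  linarith

/-- Geodesic distance on the torus `𝕋¹ = [-π,π]` with endpoints identified. -/
noncomputable def vartheta (z : ℝ) : ℝ :=
  |z - 2 * π * ((round (z / (2 * π)) : ℤ) : ℝ)|

/-- Let `γ ∈ H²(𝕋¹;ℝ³)` have unit speed, and define `δ(x,y)` by
`|γ(x)-γ(y)|² = (1-δ(x,y))·ϑ(x-y)²`.  Then `δ(x,y) ≤ √(2π)·‖γ''‖_{L²}·ϑ(x-y)^{1/2}`;
equivalently (after multiplying through by `ϑ(x-y)²`):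
`ϑ(x-y)² - |γ(x)-γ(y)|² ≤ √(2π)·‖γ''‖_{L²}·ϑ(x-y)^{1/2}·ϑ(x-y)²`. -/
theorem stmt5 (γ γ' γ'' : ℝ → EuclideanSpace ℝ (Fin 3))
    (hper : Function.Periodic γ (2 * π))
    (hper' : Function.Periodic γ' (2 * π))
    (hper'' : Function.Periodic γ'' (2 * π))
    (hInt' : ∀ a b : ℝ, IntervalIntegrable γ' volume a b)
    (hInt'' : ∀ a b : ℝ, IntervalIntegrable γ'' volume a b)
    (hFTC : ∀ a b : ℝ, γ b - γ a = ∫ x in a..b, γ' x)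
    (hFTC' : ∀ a b : ℝ, γ' b - γ' a = ∫ x in a..b, γ'' x)
    (hL2 : MemLp γ'' 2 (volume.restrict (Set.Ioc (-π) π)))
    (hspeed : ∀ x, ‖γ' x‖ = 1) :
    ∀ x y : ℝ,
      vartheta (x - y) ^ 2 - ‖γ x - γ y‖ ^ 2 ≤
        Real.sqrt (2 * π) * Real.sqrt ((1 / (2 * π)) * ∫ t in (-π)..π, ‖γ'' t‖ ^ 2) *
          vartheta (x - y) ^ ((1 : ℝ) / 2) * vartheta (x - y) ^ 2 := by
  intro x y
  have hπ := Real.pi_pos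
  set Q : ℝ := ∫ t in (-π)..π, ‖γ'' t‖ ^ 2 with hQdef
  have hQ0 : 0 ≤ Q := intervalIntegral.integral_nonneg (by linarith) (fun t _ => sq_nonneg _)
  -- constant simplification
  have hconst : Real.sqrt (2 * π) * Real.sqrt ((1 / (2 * π)) * Q) = Real.sqrt Q := by
    rw [← Real.sqrt_mul (by positivity)]
    congr 1
    field_simp
  -- the geodesic representative
  set z : ℝ := x - y with hzdef
  set k : ℤ := round (z / (2 * π)) with hkdef
  set w0 : ℝ := z - 2 * π * k with hw0def
  have hv : vartheta z = |w0| := rfl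
  have hwπ : |w0| ≤ π := by
    have h := abs_sub_round (z / (2 * π))
    have h2π : (0:ℝ) < 2 * π := by positivity
    have he : w0 = 2 * π * (z / (2 * π) - k) := by
      rw [hw0def]
      field_simp
    rw [he, abs_mul, abs_of_pos h2π]
    rw [hkdef] at *
    nlinarith
  have hwnn : 0 ≤ vartheta z := abs_nonneg _
  have hγx : γ x = γ (y + w0) := by
    have hx : x = y + w0 + (k : ℝ) * (2 * π) := by
      rw [hw0def, hzdef]; push_cast; ring
    have hp := hper.sub_int_mul_eq (x := y + w0 + (k : ℝ) * (2 * π)) k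
    rw [hx]
    rw [show y + w0 + (k:ℝ) * (2*π) - (k:ℝ) * (2*π) = y + w0 by ring] at hp
    exact hp.symm
  -- rpow to sqrt
  have hrpow : vartheta z ^ ((1:ℝ)/2) = Real.sqrt (vartheta z) :=
    (Real.sqrt_eq_rpow _).symm
  rcases le_or_gt 0 w0 with hs | hs
  · have hcore := core_estimate γ γ' γ'' hper'' hInt' hInt'' hFTC hFTC' hL2 hspeed
      y (y + w0) (by linarith) (by rw [abs_of_nonneg hs] at hwπ; linarith)
    have hwb : y + w0 - y = vartheta z := by rw [hv, abs_of_nonneg hs]; ring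
    rw [hwb] at hcore
    rw [hγx, hrpow, hconst]
    calc vartheta z ^ 2 - ‖γ (y + w0) - γ y‖ ^ 2
        ≤ Real.sqrt Q * Real.sqrt (vartheta z) * vartheta z ^ 2 := hcore
      _ = Real.sqrt Q * Real.sqrt (vartheta z) * vartheta z ^ 2 := rfl
  · have hcore := core_estimate γ γ' γ'' hper'' hInt' hInt'' hFTC hFTC' hL2 hspeed
      (y + w0) y (by linarith) (by rw [abs_of_neg hs] at hwπ; linarith)
    have hwb : y - (y + w0) = vartheta z := by rw [hv, abs_of_neg hs]; ring
    rw [hwb] at hcore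
    rw [hγx, hrpow, hconst, norm_sub_rev]
    exact hcore
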